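/- For the compound system of a diagonalizable LTI system: if g(t) = ∑_{i=1}^n r_i p_i^{t−1} for t ≥ 1 with distinct p_i, then for 2 ≤ j ≤ n the determinant of the Hankel matrix satisfies det(H_g(t,j)) = ∑_{v ∈ I_{n,j}} (∏_{i=1}^j r_{v_i}) · (∏_{(a,b)∈I_{j,2}} (p_{v_a} − p_{v_b})²) · (∏_{i=1}^j p_{v_i})^{t−1}, where the sum ranges over all j-element subsets v = {v₁<…<v_j} of {1,…,n}. -/

import Mathlib

/-- The `j × j` Hankel matrix `H_g(t,j)` with `(a,b)` entry `g(t+a+b)`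
(0-based indices, corresponding to `g(t + (a+1) + (b+1) - 2)` for 1-based ones). -/
def hankelMat (g : ℕ → ℝ) (t j : ℕ) : Matrix (Fin j) (Fin j) ℝ :=
  Matrix.of fun a b => g (t + a + b)

lemma prod_oiof {n j : ℕ} (v : Finset (Fin n)) (hv : v.card = j) (f : Fin n → ℝ) :
    ∏ i : Fin j, f (v.orderIsoOfFin hv i) = ∏ i ∈ v, f i := by
  rw [← Finset.prod_coe_sort v f]
  exact Equiv.prod_comp (v.orderIsoOfFin hv).toEquiv (fun x => f ↑x)

lemma pairprod {n j : ℕ} (v : Finset (Fin n)) (hv : v.card = j) (p : Fin n → ℝ) :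
    (∏ i : Fin j, ∏ k ∈ Finset.Ioi i, (p (v.orderIsoOfFin hv k) - p (v.orderIsoOfFin hv i))) ^ 2
      = ∏ a ∈ v, ∏ b ∈ v.filter (fun b => a < b), (p a - p b) ^ 2 := by
  set e := v.orderIsoOfFin hv with he
  rw [← Finset.prod_pow]
  refine Finset.prod_bij (fun i _ => (e i : Fin n)) (fun i _ => (e i).2)
    (fun i _ k _ h => ?_) (fun b hb => ⟨e.symm ⟨b, hb⟩, Finset.mem_univ _, by simp⟩) ?_
  · exact e.injective (Subtype.coe_injective h)
  · intro i _
    rw [← Finset.prod_pow]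
    refine Finset.prod_bij (fun k _ => (e k : Fin n)) ?_ ?_ ?_ ?_
    · intro k hk
      refine Finset.mem_filter.mpr ⟨(e k).2, ?_⟩
      exact_mod_cast (e.lt_iff_lt.mpr (Finset.mem_Ioi.mp hk))
    · intro a _ b _ h
      exact e.injective (Subtype.coe_injective h)
    · intro b hb
      obtain ⟨hbv, hib⟩ := Finset.mem_filter.mp hb
      refine ⟨e.symm ⟨b, hbv⟩, Finset.mem_Ioi.mpr ?_, by simp⟩
      rw [← e.symm_apply_apply i, e.symm.lt_iff_lt]
      exact_mod_cast hib
    · intro k _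
      rw [← neg_sub, neg_sq]

lemma sum_perm {n j t : ℕ} (r p : Fin n → ℝ) (v : Finset (Fin n)) (hv : v.card = j) :
    (∑ σ : Equiv.Perm (Fin j),
      (∏ a : Fin j, (r (v.orderIsoOfFin hv (σ a)) * p (v.orderIsoOfFin hv (σ a)) ^ (t - 1 + (a : ℕ)))) *
        (Matrix.vandermonde fun a => p (v.orderIsoOfFin hv (σ a))).det)
    = (∏ i ∈ v, r i) *
        (∏ a ∈ v, ∏ b ∈ v.filter (fun b => a < b), (p a - p b) ^ 2) *
        (∏ i ∈ v, p i) ^ (t - 1) := by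
  set e := v.orderIsoOfFin hv with he
  have key : ∀ σ : Equiv.Perm (Fin j),
      (∏ a : Fin j, (r (e (σ a)) * p (e (σ a)) ^ (t - 1 + (a : ℕ)))) *
        (Matrix.vandermonde fun a => p (e (σ a))).det
      = ((∏ i ∈ v, r i) * (∏ i ∈ v, p i) ^ (t - 1)) *
          (((Equiv.Perm.sign σ : ℝ) * ∏ a : Fin j, p (e (σ a)) ^ (a : ℕ)) *
            (Matrix.vandermonde fun a => p (e a)).det) := by
    intro σ
    have h1 : (Matrix.vandermonde fun a => p (e (σ a)))
        = (Matrix.vandermonde fun a => p (e a)).submatrix σ id := rfl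
    rw [h1, Matrix.det_permute]
    have h2 : ∀ a : Fin j, r (e (σ a)) * p (e (σ a)) ^ (t - 1 + (a : ℕ))
        = (r (e (σ a)) * p (e (σ a)) ^ (t - 1)) * p (e (σ a)) ^ (a : ℕ) := by
      intro a; rw [pow_add]; ring
    rw [Finset.prod_congr rfl (fun a _ => h2 a), Finset.prod_mul_distrib]
    rw [Equiv.prod_comp σ (fun a => r (e a) * p (e a) ^ (t - 1))]
    rw [Finset.prod_mul_distrib, Finset.prod_pow, prod_oiof, prod_oiof]
    ring
  rw [Finset.sum_congr rfl (fun σ _ => key σ), ← Finset.mul_sum, ← Finset.sum_mul]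
  have h3 : (∑ σ : Equiv.Perm (Fin j), (Equiv.Perm.sign σ : ℝ) * ∏ a : Fin j, p (e (σ a)) ^ (a : ℕ))
      = (Matrix.vandermonde fun a => p (e a)).det := by
    rw [Matrix.det_apply]
    simp [Units.smul_def, Matrix.vandermonde]
  rw [h3, ← sq, Matrix.det_vandermonde]
  rw [pairprod v hv p]
  ring

lemma img_oiof {n j : ℕ} (v : Finset (Fin n)) (hv : v.card = j) (σ : Equiv.Perm (Fin j)) :
    Finset.image (fun a => ((v.orderIsoOfFin hv (σ a) : {x // x ∈ v}) : Fin n)) Finset.univ = v := by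
  ext b
  simp only [Finset.mem_image, Finset.mem_univ, true_and]
  constructor
  · rintro ⟨a, rfl⟩; exact (v.orderIsoOfFin hv (σ a)).2
  · intro hb
    exact ⟨σ.symm ((v.orderIsoOfFin hv).symm ⟨b, hb⟩), by simp⟩

/-- Impulse response of the `j`-th compound system of a diagonalizable LTI
system `g(t) = ∑ r_i p_i^{t-1}`: for `2 ≤ j ≤ n`,
`det H_g(t,j) = ∑_{|v| = j} (∏_{i∈v} r_i) (∏_{a<b ∈ v} (p_a - p_b)²) (∏_{i∈v} p_i)^{t-1}`. -/
theorem det_hankel_compound {n j t : ℕ} (ht : 1 ≤ t) (hj2 : 2 ≤ j) (hjn : j ≤ n)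
    (r p : Fin n → ℝ) :
    (hankelMat (fun s => ∑ i, r i * p i ^ (s - 1)) t j).det =
      ∑ v : {s : Finset (Fin n) // s.card = j},
        (∏ i ∈ v.1, r i) *
        (∏ a ∈ v.1, ∏ b ∈ v.1.filter (fun b => a < b), (p a - p b) ^ 2) *
        (∏ i ∈ v.1, p i) ^ (t - 1) := by
  classical
  -- Step 1: multilinear expansion of the determinant.
  have step1 : (hankelMat (fun s => ∑ i, r i * p i ^ (s - 1)) t j).det
      = ∑ F : Fin j → Fin n,
          (∏ a : Fin j, (r (F a) * p (F a) ^ (t - 1 + (a : ℕ)))) *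
            (Matrix.vandermonde fun a => p (F a)).det := by
    have hH : hankelMat (fun s => ∑ i, r i * p i ^ (s - 1)) t j
        = Matrix.of fun a : Fin j => ∑ i : Fin n,
            (r i * p i ^ (t - 1 + (a : ℕ))) • (fun b : Fin j => p i ^ (b : ℕ)) := by
      ext a b
      simp only [hankelMat, Matrix.of_apply, Finset.sum_apply, Pi.smul_apply, smul_eq_mul]
      refine Finset.sum_congr rfl fun i _ => ?_
      rw [mul_assoc, ← pow_add]
      congr 2
      omega
    rw [hH]
    have hdet : (Matrix.of fun a : Fin j => ∑ i : Fin n,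
            (r i * p i ^ (t - 1 + (a : ℕ))) • (fun b : Fin j => p i ^ (b : ℕ))).det
        = Matrix.detRowAlternating.toMultilinearMap (fun a : Fin j => ∑ i : Fin n,
            (r i * p i ^ (t - 1 + (a : ℕ))) • (fun b : Fin j => p i ^ (b : ℕ))) := rfl
    rw [hdet]
    rw [MultilinearMap.map_sum (Matrix.detRowAlternating.toMultilinearMap)]
    refine Finset.sum_congr rfl fun F _ => ?_
    rw [show (Matrix.detRowAlternating.toMultilinearMap fun a : Fin j =>
        (r (F a) * p (F a) ^ (t - 1 + (a : ℕ))) • (fun b : Fin j => p (F a) ^ (b : ℕ)))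
      = Matrix.detRowAlternating.toMultilinearMap
          (fun a : Fin j => (fun a : Fin j => r (F a) * p (F a) ^ (t - 1 + (a : ℕ))) a
            • (fun a : Fin j => (fun b : Fin j => p (F a) ^ (b : ℕ))) a) from rfl]
    rw [MultilinearMap.map_smul_univ, smul_eq_mul]
    rfl
  rw [step1]
  -- Step 2: restrict to injective maps.
  set X : (Fin j → Fin n) → ℝ := fun F =>
    (∏ a : Fin j, (r (F a) * p (F a) ^ (t - 1 + (a : ℕ)))) *
      (Matrix.vandermonde fun a => p (F a)).det with hX
  have step2 : ∑ F : Fin j → Fin n, X F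
      = ∑ F ∈ Finset.univ.filter (fun F : Fin j → Fin n => Function.Injective F), X F := by
    symm
    refine Finset.sum_filter_of_ne fun F _ hne => ?_
    by_contra hFinj
    apply hne
    obtain ⟨a, b, hab, hne'⟩ := Function.not_injective_iff.mp hFinj
    have : (Matrix.vandermonde fun a => p (F a)).det = 0 := by
      refine Matrix.det_zero_of_row_eq hne' (funext fun c => ?_)
      simp [Matrix.vandermonde, hab]
    rw [hX]
    simp [this]
  rw [step2]
  -- Step 3: reindex by (subset, permutation).
  have step3 : ∑ F ∈ Finset.univ.filter (fun F : Fin j → Fin n => Function.Injective F), X F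
      = ∑ x : {s : Finset (Fin n) // s.card = j} × Equiv.Perm (Fin j),
          X (fun a => ((x.1.1.orderIsoOfFin x.1.2 (x.2 a) : {y // y ∈ x.1.1}) : Fin n)) := by
    symm
    refine Finset.sum_bij
      (fun x _ => fun a => ((x.1.1.orderIsoOfFin x.1.2 (x.2 a) : {y // y ∈ x.1.1}) : Fin n))
      ?_ ?_ ?_ ?_
    · rintro ⟨⟨v, hv⟩, σ⟩ _
      refine Finset.mem_filter.mpr ⟨Finset.mem_univ _, ?_⟩
      intro a b hab
      exact σ.injective ((v.orderIsoOfFin hv).injective (Subtype.coe_injective hab))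
    · rintro ⟨⟨v, hv⟩, σ⟩ _ ⟨⟨w, hw⟩, τ⟩ _ h
      have hvw : v = w := by
        rw [← img_oiof v hv σ, ← img_oiof w hw τ]
        exact congrArg (fun f => Finset.image f Finset.univ) h
      subst hvw
      obtain rfl : σ = τ := Equiv.ext fun a =>
        (v.orderIsoOfFin hv).injective (Subtype.coe_injective (congrFun h a))
      rfl
    · intro F hF
      have hFinj : Function.Injective F := (Finset.mem_filter.mp hF).2
      have him : (Finset.image F Finset.univ).card = j := by
        rw [Finset.card_image_of_injective _ hFinj, Finset.card_univ, Fintype.card_fin]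
      set e := (Finset.image F Finset.univ).orderIsoOfFin him with he
      have hσ0 : Function.Injective fun a : Fin j =>
          e.symm ⟨F a, Finset.mem_image_of_mem F (Finset.mem_univ a)⟩ := by
        intro a b hab
        have := e.symm.injective hab
        exact hFinj (congrArg Subtype.val this)
      refine ⟨⟨⟨Finset.image F Finset.univ, him⟩,
        Equiv.ofBijective _ (Finite.injective_iff_bijective.mp hσ0)⟩, Finset.mem_univ _, ?_⟩
      funext a
      simp [Equiv.ofBijective, e.apply_symm_apply]
      exact congrArg Subtype.val (e.apply_symm_apply _)
    · rintro ⟨⟨v, hv⟩, σ⟩ _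
      rfl
  rw [step3]
  -- Step 4: sum over pairs and apply sum_perm.
  rw [Fintype.sum_prod_type]
  refine Finset.sum_congr rfl fun v _ => ?_
  exact sum_perm r p v.1 v.2
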